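/- Let X be a set, I : X → [0,∞], H̃ : X → ℝ. Define s(u) = -inf{I(x) : H̃(x) = u}, E^u = {x : H̃(x) = u and I(x) = -s(u)}, and E_β = {x : I(x) + βH̃(x) = inf_{y}(I(y) + βH̃(y))}. Suppose u ∈ ℝ with s(u) > -∞ and the infimum defining s(u) is attained, and suppose β ∈ ℝ is such that s has a strictly supporting line at u with slope β, i.e., s(v) < s(u) + β(v-u) for all v ≠ u. Then E^u = E_β. -/

import Mathlib

open scoped ENNReal

/-- The microcanonical entropy `s(u) = -inf{I(x) : H̃(x) = u}` (with `inf ∅ = +∞`). -/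
noncomputable def microEnt {X : Type*} (I : X → ℝ≥0∞) (H : X → ℝ) (u : ℝ) : EReal :=
  -(⨅ x : {y : X // H y = u}, ((I x.1 : ℝ≥0∞) : EReal))

/-- Full equivalence of ensembles: if `s(u) > -∞`, the infimum defining `s(u)` is
attained, and `s` has a strictly supporting line at `u` with slope `β`, then the set
`E^u` of microcanonical equilibrium macrostates coincides with the set `E_β` of
canonical equilibrium macrostates. -/
theorem stmt7 {X : Type*} (I : X → ℝ≥0∞) (H : X → ℝ) (u β : ℝ)
    (hfin : microEnt I H u ≠ ⊥)
    (hatt : ∃ x : X, H x = u ∧ (I x : EReal) = -(microEnt I H u))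
    (hsupp : ∀ v : ℝ, v ≠ u →
      microEnt I H v < microEnt I H u + ((β * (v - u) : ℝ) : EReal)) :
    {x : X | H x = u ∧ (I x : EReal) = -(microEnt I H u)} =
      {x : X | (I x : EReal) + ((β * H x : ℝ) : EReal) =
        ⨅ y : X, ((I y : EReal) + ((β * H y : ℝ) : EReal))} := by
  obtain ⟨x₀, hx₀u, hx₀I⟩ := hatt
  set K : EReal := -(microEnt I H u) with hK
  have hKne_top : K ≠ ⊤ := by
    simp only [hK, ne_eq, EReal.neg_eq_top_iff]
    exact hfin
  have hKne_bot : K ≠ ⊥ := by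
    rw [hK, microEnt, neg_neg]
    refine ne_of_gt (lt_of_lt_of_le EReal.bot_lt_zero (le_iInf fun x => ?_))
    exact EReal.coe_ennreal_nonneg _
  obtain ⟨k, hk⟩ : ∃ k : ℝ, K = (k : EReal) := ⟨K.toReal, (EReal.coe_toReal hKne_top hKne_bot).symm⟩
  have hA : ∀ y : X, -(microEnt I H (H y)) ≤ (I y : EReal) := fun y => by
    rw [microEnt, neg_neg]
    exact iInf_le (fun x : {z : X // H z = H y} => ((I x.1 : ℝ≥0∞) : EReal)) ⟨y, rfl⟩
  -- strict inequality off the fiber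
  have hB : ∀ y : X, H y ≠ u →
      ((k + β * u : ℝ) : EReal) < (I y : EReal) + ((β * H y : ℝ) : EReal) := by
    intro y hne
    have h1 := hsupp (H y) hne
    have hmu : microEnt I H u = ((-k : ℝ) : EReal) := by
      have : microEnt I H u = -K := by rw [hK, neg_neg]
      rw [this, hk, ← EReal.coe_neg]
    rw [hmu, ← EReal.coe_add] at h1
    have h2 : ((-(-k + β * (H y - u)) : ℝ) : EReal) < -(microEnt I H (H y)) := by
      rw [EReal.coe_neg, EReal.neg_lt_neg_iff]
      exact h1
    have h3 : ((-(-k + β * (H y - u)) : ℝ) : EReal) < (I y : EReal) :=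
      lt_of_lt_of_le h2 (hA y)
    have h4 := EReal.add_lt_add_right_coe h3 (β * H y)
    rw [← EReal.coe_add] at h4
    have : (-(-k + β * (H y - u)) + β * H y : ℝ) = k + β * u := by ring
    rwa [this] at h4
  have hIx₀ : (I x₀ : EReal) = ((k : ℝ) : EReal) := by rw [hx₀I]; exact hk
  -- the infimum of the canonical functional
  have hmin : (⨅ y : X, ((I y : EReal) + ((β * H y : ℝ) : EReal))) = ((k + β * u : ℝ) : EReal) := by
    apply le_antisymm
    · have := iInf_le (fun y : X => ((I y : EReal) + ((β * H y : ℝ) : EReal))) x₀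
      rwa [hIx₀, hx₀u, ← EReal.coe_add] at this
    · refine le_iInf fun y => ?_
      by_cases h : H y = u
      · have hIy : ((k : ℝ) : EReal) ≤ (I y : EReal) := by
          rw [← hk, hK]
          have := hA y
          rwa [h] at this
        rw [h, EReal.coe_add]
        exact add_le_add hIy le_rfl
      · exact (hB y h).le
  ext x
  simp only [Set.mem_setOf_eq, hmin]
  constructor
  · rintro ⟨hxu, hxI⟩
    rw [hxI, hxu, hk, ← EReal.coe_add]
  · intro hx
    by_cases h : H x = u
    · refine ⟨h, ?_⟩
      rw [h] at hx
      rw [hk]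
      have := congrArg (fun z : EReal => z - ((β * u : ℝ) : EReal)) hx
      rw [EReal.add_sub_cancel_right, ← EReal.coe_sub] at this
      rw [this]
      norm_cast
      ring
    · exact absurd hx (ne_of_gt (hB x h))
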